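/- Let R be an NI-ring, i.e., the set Nil(R) of nilpotent elements of R forms a two-sided ideal. If the full matrix ring M_n(R) is strongly unit nil-clean for some n ≥ 1, then R is strongly unit nil-clean. -/

import Mathlib

/-- An element `x` of a ring is *strongly nil-clean* if `x = e + b` where `e` is an
idempotent, `b` is nilpotent, and `e` and `b` commute. -/
def IsStronglyNilClean {R : Type*} [Ring R] (x : R) : Prop :=
  ∃ e b : R, IsIdempotentElem e ∧ IsNilpotent b ∧ e * b = b * e ∧ x = e + b

/-- A ring `R` is *strongly unit nil-clean* if for every `x : R` there is a unit `u`
such that `u * x` is strongly nil-clean. -/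
def StronglyUnitNilClean (R : Type*) [Ring R] : Prop :=
  ∀ x : R, ∃ u : Rˣ, IsStronglyNilClean ((u : R) * x)

/-- A ring `R` is *unit-regular* if every `a : R` satisfies `a = a * u * a` for some unit `u`. -/
def UnitRegular (R : Type*) [Ring R] : Prop :=
  ∀ a : R, ∃ u : Rˣ, a = a * (u : R) * a

/-- A group is *locally finite* if every finitely generated subgroup is finite. -/
def LocallyFiniteGroup (G : Type*) [Group G] : Prop :=
  ∀ H : Subgroup G, H.FG → (H : Set G).Finite

/-- A subset `T` of a ring is *nilpotent* if there is `n ≥ 1` such that every product of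
`n` elements of `T` is zero. -/
def IsNilpotentSubset {R : Type*} [Ring R] (T : Set R) : Prop :=
  ∃ n : ℕ, 0 < n ∧ ∀ l : List R, (∀ a ∈ l, a ∈ T) → l.length = n → l.prod = 0

/-- A subset `S` of a ring is *locally nilpotent* if the non-unital subring generated by
any finite subset of `S` is nilpotent. -/
def IsLocallyNilpotentSet {R : Type*} [Ring R] (S : Set R) : Prop :=
  ∀ F : Finset R, (F : Set R) ⊆ S →
    IsNilpotentSubset ((NonUnitalSubring.closure (F : Set R) : Set R))

/-- A ring is *NI* if the set of nilpotent elements forms a two-sided ideal. -/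
def IsNIRing (R : Type*) [Ring R] : Prop :=
  ∃ I : TwoSidedIdeal R, ∀ x : R, x ∈ I ↔ IsNilpotent x

/-- A ring is *weakly 2-primal* if its set of nilpotent elements is a two-sided ideal
which is moreover locally nilpotent. -/
def Weakly2Primal (R : Type*) [Ring R] : Prop :=
  IsNIRing R ∧ IsLocallyNilpotentSet {x : R | IsNilpotent x}

open Polynomial in
lemma isStronglyNilClean_poly_aux {R : Type*} [Ring R] (a : R)
    (h : IsNilpotent (a - a * a)) :
    ∃ e b : R, e * e = e ∧ IsNilpotent b ∧ e * b = b * e ∧ a = e + b := by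
  classical
  obtain ⟨m₀, hm₀⟩ := h
  set m : ℕ := m₀ + 1 with hmdef
  have hq : (a - a * a) ^ m = 0 := by rw [hmdef, pow_succ, hm₀, zero_mul]
  have hm1 : 1 ≤ m := Nat.le_add_left 1 m₀
  set t : ℕ → ℤ[X] := fun i => X ^ i * (1 - X) ^ (2 * m - 1 - i) * ((2 * m - 1).choose i : ℤ[X])
    with ht
  set P : ℤ[X] := ∑ i ∈ Finset.Ico m (2 * m), t i with hPdef
  set Q : ℤ[X] := ∑ i ∈ Finset.range m, t i with hQdef
  have hbin : (1 : ℤ[X]) = ∑ i ∈ Finset.range (2 * m), t i := by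
    have h1 := add_pow (X : ℤ[X]) (1 - X) (2 * m - 1)
    rw [show (X + (1 - X) : ℤ[X]) = 1 by ring, one_pow,
      show 2 * m - 1 + 1 = 2 * m by omega] at h1
    exact h1
  have hsplit : Q + P = 1 := by
    rw [hQdef, hPdef, Finset.sum_range_add_sum_Ico _ (by omega : m ≤ 2 * m)]
    exact hbin.symm
  have hXP : (X : ℤ[X]) ^ m ∣ P := by
    apply Finset.dvd_sum
    intro i hi
    rw [Finset.mem_Ico] at hi
    exact ((pow_dvd_pow X hi.1).mul_right _).mul_right _
  have hX1Q : ((1 - X : ℤ[X])) ^ m ∣ Q := by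
    apply Finset.dvd_sum
    intro i hi
    rw [Finset.mem_range] at hi
    have : m ≤ 2 * m - 1 - i := by omega
    exact ((pow_dvd_pow (1 - X : ℤ[X]) this).mul_left _).mul_right _
  have hPQ : (X * (1 - X) : ℤ[X]) ^ m ∣ P - P * P := by
    have h1 : P - P * P = P * Q := by
      have : Q = 1 - P := by rw [← hsplit]; ring
      rw [this]; ring
    rw [h1, mul_pow]
    exact mul_dvd_mul hXP hX1Q
  have hXp : (X : ℤ[X]) ∣ P := by
    refine dvd_trans ?_ hXP
    exact dvd_pow_self X (by omega)
  have hX1p : ((X : ℤ[X]) - C 1) ∣ (X - P) := by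
    rw [dvd_iff_isRoot]
    have hPeval : P.eval 1 = 1 := by
      rw [hPdef, Polynomial.eval_finset_sum]
      rw [Finset.sum_eq_single (2 * m - 1)]
      · simp [ht, Nat.choose_self, show 2 * m - 1 - (2 * m - 1) = 0 by omega]
      · intro i hi hne
        rw [Finset.mem_Ico] at hi
        simp only [ht, eval_mul, eval_pow, eval_one, eval_sub, eval_X, one_pow, one_mul,
          sub_self]
        rw [zero_pow (by omega : 2 * m - 1 - i ≠ 0)]
        ring
      · intro hni
        exfalso
        apply hni
        rw [Finset.mem_Ico]
        omega
    simp [IsRoot, hPeval]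
  have hcop : IsCoprime (X : ℤ[X]) (X - C 1) := by
    refine ⟨1, -1, ?_⟩
    simp only [Polynomial.C_1]
    ring
  have hdvd : (X * (X - C 1) : ℤ[X]) ∣ (X - P) :=
    hcop.mul_dvd ((dvd_refl X).sub hXp) hX1p
  -- evaluation
  set φ := Polynomial.aeval (R := ℤ) a with hφ
  set e : R := φ P with hedef
  set b : R := a - e with hbdef
  have haX : φ X = a := by simp [hφ]
  have hq' : φ (X * (1 - X)) = a - a * a := by
    simp only [hφ, map_mul, map_sub, map_one, Polynomial.aeval_X]
    rw [mul_sub, mul_one]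
  have hq2 : φ (X * (X - C 1)) = -(a - a * a) := by
    simp only [hφ, map_mul, map_sub, Polynomial.aeval_X, Polynomial.aeval_C, map_one]
    rw [mul_sub, mul_one, neg_sub]
  refine ⟨e, b, ?_, ?_, ?_, by rw [hbdef]; abel⟩
  · -- idempotent
    obtain ⟨D, hD⟩ := hPQ
    have h1 : e - e * e = φ (P - P * P) := by simp [hedef, map_sub, map_mul]
    rw [hD, map_mul, map_pow, hq', hq, zero_mul] at h1
    exact (sub_eq_zero.mp h1).symm
  · -- nilpotent
    obtain ⟨H, hH⟩ := hdvd
    refine ⟨m, ?_⟩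
    have hb' : b = φ (X - P) := by
      simp [hbdef, hedef, map_sub, haX]
    rw [hb', ← map_pow, hH, mul_pow, map_mul, map_pow, hq2]
    rw [neg_pow, hq]
    simp
  · -- commute
    have hb' : b = φ (X - P) := by simp [hbdef, hedef, map_sub, haX]
    rw [hedef, hb', ← map_mul, ← map_mul, mul_comm]


section Reduced

variable {S : Type*} [Ring S]

lemma red_symm (hsq : ∀ s : S, s * s = 0 → s = 0) {p q : S} (h : p * q = 0) :
    q * p = 0 := by
  apply hsq
  rw [mul_assoc q p (q * p), ← mul_assoc p q p, h, zero_mul, mul_zero]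

lemma red_cancel (hsq : ∀ s : S, s * s = 0 → s = 0) {x s : S} (h : x * (x * s) = 0) :
    x * s = 0 := by
  have h1 : (x * s) * x = 0 := red_symm hsq h
  apply hsq
  rw [← mul_assoc (x * s) x s, h1, zero_mul]

lemma red_left (hsq : ∀ s : S, s * s = 0 → s = 0) {x a : S} (h : x * a = 0) (t : S) :
    x * (t * a) = 0 := by
  have h1 : a * x = 0 := red_symm hsq h
  have h2 : (t * a) * x = 0 := by rw [mul_assoc, h1, mul_zero]
  exact red_symm hsq h2

end Reduced

section Stage

variable {S : Type*} [Ring S] {n : ℕ}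

local notation "T" => Matrix (Fin n) (Fin n) S

lemma smul_one_mulVec (y : S) (v : Fin n → S) :
    (y • (1 : T)).mulVec v = fun i => y * v i := by
  funext i
  simp [Matrix.mulVec, dotProduct, Matrix.smul_apply, Matrix.one_apply, smul_eq_mul,
    mul_ite, ite_mul, mul_one, mul_zero, zero_mul, Finset.sum_ite_eq]

lemma sunc_stage (hsq : ∀ s : S, s * s = 0 → s = 0) (i0 : Fin n)
    (hS : StronglyUnitNilClean (Matrix (Fin n) (Fin n) S)) (x : S) :
    ∃ (u : (Matrix (Fin n) (Fin n) S)ˣ) (e B : Matrix (Fin n) (Fin n) S),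
      u.val * (x • 1) = e + B ∧ IsNilpotent B ∧
      (∀ i j, x * ((1 : Matrix (Fin n) (Fin n) S) - e) i j = 0) ∧
      (∀ a : S, x * a = 0 → e i0 i0 * a = 0) := by
  classical
  obtain ⟨u, e, B, he, hBnil, hcomm, hdec⟩ := hS (x • 1)
  set M : T := u.val * (x • 1) with hM
  obtain ⟨m₀, hB₀⟩ := hBnil
  set k : ℕ := m₀ + 1 with hkdef
  have hBk : B ^ k = 0 := by rw [hkdef, pow_succ, hB₀, zero_mul]
  have he' : e * e = e := he
  have hdecM : M = e + B := hdec
  set F : T := 1 - e with hF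
  have hMF : M * F = B * F := by
    rw [hdecM, hF, mul_sub, mul_sub, mul_one, mul_one, add_mul, he']
    abel
  have hcommBM : Commute B M := by
    have h0 : Commute B (e + B) := (Commute.add_right (show Commute B e from hcomm.symm) (Commute.refl B))
    rwa [← hdecM] at h0
  have hMkF : ∀ j : ℕ, M ^ j * F = B ^ j * F := by
    intro j
    induction j with
    | zero => rw [pow_zero, pow_zero]
    | succ j ih =>
      rw [pow_succ, mul_assoc, hMF, ← mul_assoc, ← (hcommBM.pow_right j).eq, mul_assoc, ih,
        ← mul_assoc, ← pow_succ']
  have hMkF0 : M ^ k * F = 0 := by rw [hMkF k, hBk, zero_mul]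
  -- M ^ j * e = (1 + B) ^ j * e
  have hcomm1B : Commute (1 + B) M := (Commute.one_left M).add_left hcommBM
  have hMe1 : M * e = (1 + B) * e := by
    rw [hdecM, add_mul, add_mul, he', one_mul]
  have hMke : ∀ j : ℕ, M ^ j * e = (1 + B) ^ j * e := by
    intro j
    induction j with
    | zero => rw [pow_zero, pow_zero]
    | succ j ih =>
      rw [pow_succ, mul_assoc, hMe1, ← mul_assoc, ← (hcomm1B.pow_right j).eq, mul_assoc, ih,
        ← mul_assoc, ← pow_succ']
  have h1Bu : IsUnit ((1 + B) ^ k) := (IsNilpotent.isUnit_one_add ⟨m₀, hB₀⟩).pow k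
  obtain ⟨c, hc⟩ := h1Bu
  have he_eq : e = (c⁻¹).val * M ^ k := by
    have h1 : M ^ k = c.val * e := by
      have h2 : M ^ k * e + M ^ k * F = M ^ k := by
        rw [← mul_add, hF, show e + ((1 : T) - e) = 1 from by abel, mul_one]
      rw [← h2, hMkF0, add_zero, hMke k, hc]
    rw [h1, ← mul_assoc, Units.inv_mul, one_mul]
  -- kernel lemma
  have KL : ∀ (j : ℕ) (v : Fin n → S), (M ^ (j + 1)).mulVec v = 0 → ∀ i, x * v i = 0 := by
    intro j
    induction j with
    | zero =>
      intro v hv i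
      rw [pow_one, hM, ← Matrix.mulVec_mulVec] at hv
      have hw : (x • (1 : T)).mulVec v = 0 := by
        have h7 := congrArg (fun w => (u⁻¹).val.mulVec w) hv
        simp only [Matrix.mulVec_mulVec, Matrix.mulVec_zero] at h7
        rwa [← mul_assoc, Units.inv_mul, one_mul] at h7
      have := congrFun hw i
      rw [smul_one_mulVec] at this
      exact this
    | succ j ih =>
      intro v hv i
      rw [pow_succ, ← Matrix.mulVec_mulVec] at hv
      have hMv : ∀ l, x * (M.mulVec v) l = 0 := ih (M.mulVec v) hv
      set w : Fin n → S := (x • (1 : T)).mulVec v with hw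
      have hMw : M.mulVec v = u.val.mulVec w := by
        rw [hw, Matrix.mulVec_mulVec, hM]
      have hwv : ∀ l, x * w l = 0 := by
        intro l
        have h3 : (u⁻¹).val.mulVec (u.val.mulVec w) = w := by
          rw [Matrix.mulVec_mulVec, Units.inv_mul, Matrix.one_mulVec]
        rw [← h3]
        have h4 : ∀ i', x * (u.val.mulVec w) i' = 0 := by
          intro i'
          rw [← hMw]; exact hMv i'
        show x * (Finset.univ.sum fun l' => (u⁻¹).val l l' * (u.val.mulVec w) l') = 0
        rw [Finset.mul_sum]
        apply Finset.sum_eq_zero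
        intro l' _
        exact red_left hsq (h4 l') _
      have h5 : x * (x * v i) = 0 := by
        have := hwv i
        rw [hw, smul_one_mulVec] at this
        exact this
      exact red_cancel hsq h5
  refine ⟨u, e, B, hdec, ⟨m₀, hB₀⟩, ?_, ?_⟩
  · -- entries of 1 - e are in ann(x)
    intro i j
    have hv : (M ^ k).mulVec (fun l => F l j) = 0 := by
      funext i'
      show (Finset.univ.sum fun l => (M ^ k) i' l * F l j) = 0
      rw [← Matrix.mul_apply, hMkF0]
      rfl
    rw [hkdef] at hv
    exact KL m₀ _ hv i
  · -- e i0 i0 * a = 0 for a ∈ ann(x)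
    intro a ha
    set v : Fin n → S := fun i => if i = i0 then a else 0 with hvdef
    have hw0 : (x • (1 : T)).mulVec v = 0 := by
      rw [smul_one_mulVec]
      funext i
      by_cases hi : i = i0 <;> simp [hvdef, hi, ha]
    have hv1 : M.mulVec v = 0 := by
      rw [hM, ← Matrix.mulVec_mulVec, hw0, Matrix.mulVec_zero]
    have hvk : (M ^ k).mulVec v = 0 := by
      rw [hkdef, pow_succ, ← Matrix.mulVec_mulVec, hv1, Matrix.mulVec_zero]
    have hev : e.mulVec v = 0 := by
      rw [he_eq, ← Matrix.mulVec_mulVec, hvk, Matrix.mulVec_zero]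
    have := congrFun hev i0
    have h6 : (Finset.univ.sum fun l => e i0 l * v l) = 0 := this
    rw [Finset.sum_eq_single i0 (by intro l _ hl; simp [hvdef, hl]) (by simp)] at h6
    simpa [hvdef] using h6

end Stage

section Core

variable {S : Type*} [Ring S] {n : ℕ}

lemma sunc_reduced_idem (hsq : ∀ s : S, s * s = 0 → s = 0) (i0 : Fin n)
    (hS : StronglyUnitNilClean (Matrix (Fin n) (Fin n) S)) (x : S) :
    ∃ v : Sˣ, ((v : S) * x) * ((v : S) * x) = (v : S) * x := by
  classical
  obtain ⟨u, e, B, hdec, hBnil, P1, P2⟩ := sunc_stage hsq i0 hS x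
  set g : S := 1 - e i0 i0 with hgdef
  have hxg : x * g = 0 := by
    have h1 := P1 i0 i0
    rwa [Matrix.sub_apply, Matrix.one_apply_eq] at h1
  have hgmem : ∀ a : S, x * a = 0 → g * a = a := by
    intro a ha
    rw [hgdef, sub_mul, one_mul, P2 a ha, sub_zero]
  have hgg : g * g = g := hgmem g hxg
  have hgx : g * x = 0 := red_symm hsq hxg
  set x₂ : S := x + g with hx2def
  have hx2g : x₂ * g = g := by rw [hx2def, add_mul, hxg, hgg, zero_add]
  have hrann : ∀ s : S, x₂ * s = 0 → s = 0 := by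
    intro s hs
    have hgx2 : g * x₂ = g := by rw [hx2def, mul_add, hgx, hgg, zero_add]
    have hgs : g * s = 0 := by
      have h1 : g * (x₂ * s) = 0 := by rw [hs, mul_zero]
      rwa [← mul_assoc, hgx2] at h1
    have hxs : x * s = 0 := by
      have h2 : x * s + g * s = 0 := by rw [← add_mul, ← hx2def, hs]
      rwa [hgs, add_zero] at h2
    have h3 := hgmem s hxs
    rw [hgs] at h3
    exact h3.symm
  obtain ⟨u₂, e₂, B₂, hdec₂, hB₂, P1₂, _⟩ := sunc_stage hsq i0 hS x₂
  have he₂ : e₂ = 1 := by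
    ext i j
    have h0 : ((1 : Matrix (Fin n) (Fin n) S) - e₂) i j = 0 := hrann _ (P1₂ i j)
    rw [Matrix.sub_apply] at h0
    have h1 := sub_eq_zero.mp h0
    exact h1.symm
  have hM₂ : IsUnit ((x₂ • 1 : Matrix (Fin n) (Fin n) S)) := by
    have h1 : IsUnit (u₂.val * (x₂ • 1)) := by
      rw [hdec₂, he₂]
      exact IsNilpotent.isUnit_one_add hB₂
    have h2 := ((u₂⁻¹).isUnit).mul h1
    rwa [← mul_assoc, Units.inv_mul, one_mul] at h2
  obtain ⟨w, hw⟩ := hM₂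
  have hw1 : (x₂ • (1 : Matrix (Fin n) (Fin n) S)) * (w⁻¹).val = 1 := by
    rw [← hw]; exact w.mul_inv
  have hw2 : (w⁻¹).val * (x₂ • (1 : Matrix (Fin n) (Fin n) S)) = 1 := by
    rw [← hw]; exact w.inv_mul
  set y : S := (w⁻¹).val i0 i0 with hydef
  have hx2y : x₂ * y = 1 := by
    rw [Matrix.smul_mul, one_mul] at hw1
    have h1 := congrFun (congrFun hw1 i0) i0
    rw [Matrix.smul_apply, smul_eq_mul, Matrix.one_apply_eq] at h1
    exact h1
  have hyx2 : y * x₂ = 1 := by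
    have h1 := congrFun (congrFun hw2 i0) i0
    rw [Matrix.mul_apply] at h1
    rw [Finset.sum_eq_single i0 ?hne ?hnm] at h1
    case hne =>
      intro l _ hl
      rw [Matrix.smul_apply, Matrix.one_apply_ne hl, smul_eq_mul, mul_zero, mul_zero]
    case hnm =>
      intro h
      exact absurd (Finset.mem_univ i0) h
    rw [Matrix.smul_apply, Matrix.one_apply_eq, smul_eq_mul, mul_one] at h1
    have h2 : y * x₂ = (w⁻¹).val i0 i0 * x₂ := by rw [hydef]
    rw [h2, h1]
  have hyg : y * g = g := by
    calc y * g = y * (x₂ * g) := by rw [hx2g]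
    _ = (y * x₂) * g := by rw [mul_assoc]
    _ = g := by rw [hyx2, one_mul]
  have hyx : y * x = 1 - g := by
    have h1 : y * x + g = 1 := by
      rw [← hyg]
      rw [← mul_add, ← hx2def, hyx2]
    rw [← h1]; abel
  refine ⟨⟨y, x₂, hyx2, hx2y⟩, ?_⟩
  show (y * x) * (y * x) = y * x
  rw [hyx]
  have h2 : (1 - g) * g = 0 := by rw [sub_mul, one_mul, hgg, sub_self]
  rw [mul_sub, mul_one, h2, sub_zero]

end Core


lemma sunc_of_surjective {T T' : Type*} [Ring T] [Ring T'] (f : T →+* T')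
    (hf : Function.Surjective f) (h : StronglyUnitNilClean T) :
    StronglyUnitNilClean T' := by
  intro x'
  obtain ⟨x, rfl⟩ := hf x'
  obtain ⟨u, e, b, he, hb, hcomm, hdec⟩ := h x
  refine ⟨Units.map f.toMonoidHom u, f e, f b, ?_, hb.map f, ?_, ?_⟩
  · show f e * f e = f e
    rw [← map_mul, he.eq]
  · rw [← map_mul, ← map_mul, hcomm]
  · have h1 : ((Units.map f.toMonoidHom u : T'ˣ) : T') = f (u : T) := rfl
    rw [h1, ← map_mul, hdec, map_add]


theorem stronglyUnitNilClean_of_matrix_of_NI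
    (R : Type*) [Ring R] (hNI : IsNIRing R) (n : ℕ) (hn : 1 ≤ n)
    (h : StronglyUnitNilClean (Matrix (Fin n) (Fin n) R)) :
    StronglyUnitNilClean R := by
  classical
  obtain ⟨I, hI⟩ := hNI
  set c : RingCon R := I.ringCon with hc
  let S := c.Quotient
  let π : R →+* S := c.mk'
  have hπs : Function.Surjective π := fun y => Quotient.inductionOn' y (fun r => ⟨r, rfl⟩)
  have hπ0 : ∀ r : R, π r = 0 ↔ IsNilpotent r := by
    intro r
    have h1 : π r = π 0 ↔ c r 0 := RingCon.eq c
    rw [map_zero] at h1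
    rw [h1]
    rw [show (c r 0 ↔ r - 0 ∈ I) from I.rel_iff r 0, sub_zero]
    exact hI r
  have hsq : ∀ s : S, s * s = 0 → s = 0 := by
    intro s hs
    obtain ⟨r, rfl⟩ := hπs s
    rw [← map_mul] at hs
    obtain ⟨j, hj⟩ := (hπ0 _).1 hs
    have hnil : IsNilpotent r := by
      refine ⟨2 * j, ?_⟩
      rw [two_mul, pow_add, ← (Commute.refl r).mul_pow, hj]
    exact (hπ0 r).2 hnil
  have hπM : Function.Surjective (π.mapMatrix :
      Matrix (Fin n) (Fin n) R →+* Matrix (Fin n) (Fin n) S) := by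
    intro A
    refine ⟨fun i j => (hπs (A i j)).choose, ?_⟩
    ext i j
    show π (hπs (A i j)).choose = A i j
    exact (hπs (A i j)).choose_spec
  have hSM : StronglyUnitNilClean (Matrix (Fin n) (Fin n) S) :=
    sunc_of_surjective π.mapMatrix hπM h
  set i0 : Fin n := ⟨0, hn⟩ with hi0
  intro x
  obtain ⟨v, hv⟩ := sunc_reduced_idem hsq i0 hSM (π x)
  obtain ⟨p, hp⟩ := hπs (v : S)
  obtain ⟨q, hq⟩ := hπs ((v⁻¹ : Sˣ) : S)
  have hpq : IsNilpotent (p * q - 1) := by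
    apply (hπ0 _).1
    rw [map_sub, map_mul, hp, hq, map_one, Units.mul_inv, sub_self]
  have hqp : IsNilpotent (q * p - 1) := by
    apply (hπ0 _).1
    rw [map_sub, map_mul, hp, hq, map_one, Units.inv_mul, sub_self]
  have hpqu : IsUnit (p * q) := by
    have h1 := hpq.isUnit_add_one
    rwa [sub_add_cancel] at h1
  have hqpu : IsUnit (q * p) := by
    have h1 := hqp.isUnit_add_one
    rwa [sub_add_cancel] at h1
  obtain ⟨cu, hcu⟩ := hpqu
  obtain ⟨du, hdu⟩ := hqpu
  set rinv : R := q * (cu⁻¹).val with hrinv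
  set linv : R := (du⁻¹).val * q with hlinv
  have h1 : p * rinv = 1 := by
    rw [hrinv, ← mul_assoc, ← hcu]
    exact cu.mul_inv
  have h2 : linv * p = 1 := by
    rw [hlinv, mul_assoc, ← hdu]
    exact du.inv_mul
  have h3 : linv = rinv := by
    calc linv = linv * 1 := (mul_one _).symm
    _ = linv * (p * rinv) := by rw [h1]
    _ = linv * p * rinv := (mul_assoc _ _ _).symm
    _ = 1 * rinv := by rw [h2]
    _ = rinv := one_mul _
  refine ⟨⟨p, rinv, h1, by rw [← h3]; exact h2⟩, ?_⟩
  have hnil : IsNilpotent ((p * x) - (p * x) * (p * x)) := by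
    apply (hπ0 _).1
    simp only [map_sub, map_mul, hp]
    rw [hv, sub_self]
  obtain ⟨e, b, he, hb, hcomm, hdec⟩ := isStronglyNilClean_poly_aux (p * x) hnil
  exact ⟨e, b, he, hb, hcomm, hdec⟩
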